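/- Let φ : ℝ² → ℝ be C² and η : ℝ → ℝ be C². Assume the kinematic condition -η'(x)φ_x + φ_y = 0 holds along the graph y = η(x) (all partials evaluated at (x,η(x))). Define the unit normal n = (−η', 1)/√(1+η'²). Then the normal derivative of the speed squared satisfies n · ∇(φ_x² + φ_y²) = 2κ(φ_x² + φ_y²) at each point of the graph, where κ = η''/(1+η'²)^{3/2} is the curvature of the graph. -/

import Mathlib

noncomputable def px (f : ℝ × ℝ → ℝ) (p : ℝ × ℝ) : ℝ := fderiv ℝ f p (1, 0)
noncomputable def py (f : ℝ × ℝ → ℝ) (p : ℝ × ℝ) : ℝ := fderiv ℝ f p (0, 1)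

/-- speed squared -/
noncomputable def speedSq (φ : ℝ × ℝ → ℝ) (p : ℝ × ℝ) : ℝ := (px φ p) ^ 2 + (py φ p) ^ 2

lemma hasFDerivAt_eval (φ : ℝ × ℝ → ℝ) (hφ : ContDiff ℝ 2 φ) (v p : ℝ × ℝ) :
    HasFDerivAt (fun q => fderiv ℝ φ q v)
      ((ContinuousLinearMap.apply ℝ ℝ v).comp (fderiv ℝ (fderiv ℝ φ) p)) p := by
  have h1 : ContDiff ℝ 1 (fderiv ℝ φ) := hφ.fderiv_right (by norm_num)
  have h2 : HasFDerivAt (fderiv ℝ φ) (fderiv ℝ (fderiv ℝ φ) p) p :=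
    (h1.differentiable one_ne_zero p).hasFDerivAt
  exact (ContinuousLinearMap.apply ℝ ℝ v).hasFDerivAt.comp p h2

/-- Key linearisation identity: ∂ₙ(|∇φ|²) = 2κ|∇φ|² along the free boundary. -/
theorem stmt_1 (φ : ℝ × ℝ → ℝ) (η : ℝ → ℝ)
    (hφ : ContDiff ℝ 2 φ) (hη : ContDiff ℝ 2 η)
    (hkin : ∀ x : ℝ, -(deriv η x) * px φ (x, η x) + py φ (x, η x) = 0) :
    ∀ x : ℝ,
      (-(deriv η x) * px (speedSq φ) (x, η x) + py (speedSq φ) (x, η x))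
          / Real.sqrt (1 + (deriv η x) ^ 2)
        = 2 * (deriv (deriv η) x / (1 + (deriv η x) ^ 2) ^ ((3 : ℝ) / 2))
            * speedSq φ (x, η x) := by
  intro x
  set p : ℝ × ℝ := (x, η x) with hp
  set t : ℝ := deriv η x with ht
  set s : ℝ := deriv (deriv η) x with hs
  set B := fderiv ℝ (fderiv ℝ φ) p with hB
  set u : ℝ := px φ p with hu
  set v : ℝ := py φ p with hv
  set a : ℝ := B (1, 0) (1, 0) with ha
  set b : ℝ := B (1, 0) (0, 1) with hb
  set c : ℝ := B (0, 1) (0, 1) with hc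
  -- symmetry of the second derivative
  have hφdiff : Differentiable ℝ φ := hφ.differentiable (by norm_num)
  have hC1 : ContDiff ℝ 1 (fderiv ℝ φ) := hφ.fderiv_right (by norm_num)
  have hB2 : HasFDerivAt (fderiv ℝ φ) B p := (hC1.differentiable one_ne_zero p).hasFDerivAt
  have hsym : B (0, 1) (1, 0) = b :=
    second_derivative_symmetric (fun y => (hφdiff y).hasFDerivAt) hB2 (0, 1) (1, 0)
  -- linearity of B in the first argument
  have hdir : ((1 : ℝ), t) = ((1 : ℝ), (0 : ℝ)) + t • ((0 : ℝ), (1 : ℝ)) := by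
    simp
  have hB1t : ∀ w : ℝ × ℝ, B (1, t) w = B (1, 0) w + t * B (0, 1) w := by
    intro w
    rw [hdir, map_add, map_smul]
    simp
  -- the curve x ↦ (x, η x)
  have hηdiff : Differentiable ℝ η := hη.differentiable (by norm_num)
  have hγ : HasDerivAt (fun y : ℝ => ((y, η y) : ℝ × ℝ)) (1, t) x :=
    (hasDerivAt_id x).prodMk (hηdiff x).hasDerivAt
  -- derivatives along the curve
  have hux : HasDerivAt (fun y : ℝ => px φ (y, η y)) (B (1, t) (1, 0)) x := by
    have := (hasFDerivAt_eval φ hφ (1, 0) p).comp_hasDerivAt x hγ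
    exact this
  have hvx : HasDerivAt (fun y : ℝ => py φ (y, η y)) (B (1, t) (0, 1)) x := by
    have := (hasFDerivAt_eval φ hφ (0, 1) p).comp_hasDerivAt x hγ
    exact this
  -- derivative of deriv η
  have hη1 : ContDiff ℝ 1 (deriv η) :=
    ((contDiff_succ_iff_deriv (n := 1)).mp (by exact_mod_cast hη)).2.2
  have hηx : HasDerivAt (deriv η) s x := (hη1.differentiable one_ne_zero x).hasDerivAt
  -- differentiate the kinematic condition
  have hG : HasDerivAt (fun y : ℝ => -(deriv η y) * px φ (y, η y) + py φ (y, η y))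
      ((-s) * u + (-t) * B (1, t) (1, 0) + B (1, t) (0, 1)) x := by
    have := (hηx.neg.mul hux).add hvx
    exact this.congr_deriv rfl
  have hE : (-s) * u + (-t) * B (1, t) (1, 0) + B (1, t) (0, 1) = 0 := by
    have h0 : HasDerivAt (fun y : ℝ => -(deriv η y) * px φ (y, η y) + py φ (y, η y)) 0 x := by
      have : (fun y : ℝ => -(deriv η y) * px φ (y, η y) + py φ (y, η y)) = fun _ => (0 : ℝ) :=
        funext hkin
      rw [this]
      exact hasDerivAt_const x 0
    exact hG.unique h0
  have key : -s * u + (-t) * (a + t * b) + (b + t * c) = 0 := by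
    have h1 := hB1t (1, 0)
    have h2 := hB1t (0, 1)
    rw [h1, h2, hsym] at hE
    linarith [hE]
  -- derivative of speedSq
  have h1 := hasFDerivAt_eval φ hφ (1, 0) p
  have h2 := hasFDerivAt_eval φ hφ (0, 1) p
  set L1 := (ContinuousLinearMap.apply ℝ ℝ ((1 : ℝ), (0 : ℝ))).comp B with hL1
  set L2 := (ContinuousLinearMap.apply ℝ ℝ ((0 : ℝ), (1 : ℝ))).comp B with hL2
  have hS : HasFDerivAt (speedSq φ) (u • L1 + u • L1 + (v • L2 + v • L2)) p := by
    have := (h1.mul h1).add (h2.mul h2)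
    have heq : speedSq φ = fun q => fderiv ℝ φ q (1, 0) * fderiv ℝ φ q (1, 0)
        + fderiv ℝ φ q (0, 1) * fderiv ℝ φ q (0, 1) := by
      funext q
      simp [speedSq, px, py, pow_two]
    rw [heq]
    exact this
  have hpxS : px (speedSq φ) p = 2 * u * a + 2 * v * b := by
    rw [px, hS.fderiv]
    simp [hL1, hL2]
    ring
  have hpyS : py (speedSq φ) p = 2 * u * b + 2 * v * c := by
    rw [py, hS.fderiv]
    simp [hL1, hL2]
    rw [hsym]
    ring
  -- the numerator
  have hvtu : v = t * u := by
    have := hkin x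
    rw [← hu, ← hv, ← ht] at this
    linarith
  have hnum : -t * px (speedSq φ) p + py (speedSq φ) p = 2 * s * u ^ 2 := by
    rw [hpxS, hpyS, hvtu]
    linear_combination (2 * u) * key
  -- speedSq value
  have hSval : speedSq φ p = u ^ 2 * (1 + t ^ 2) := by
    rw [speedSq, ← hu, ← hv, hvtu]
    ring
  -- rpow computation
  have hD : (0 : ℝ) < 1 + t ^ 2 := by positivity
  have hsq : Real.sqrt (1 + t ^ 2) > 0 := Real.sqrt_pos.mpr hD
  have hrpow : (1 + t ^ 2) ^ ((3 : ℝ) / 2) = (1 + t ^ 2) * Real.sqrt (1 + t ^ 2) := by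
    rw [show (3 : ℝ) / 2 = 1 + 1 / 2 by norm_num, Real.rpow_add hD, Real.rpow_one,
      Real.sqrt_eq_rpow]
  show (-t * px (speedSq φ) p + py (speedSq φ) p) / Real.sqrt (1 + t ^ 2)
      = 2 * (s / (1 + t ^ 2) ^ ((3 : ℝ) / 2)) * speedSq φ p
  rw [hnum, hSval, hrpow]
  have hne : Real.sqrt (1 + t ^ 2) ≠ 0 := ne_of_gt hsq
  have hDne : (1 + t ^ 2) ≠ 0 := ne_of_gt hD
  field_simp
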